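/- arXiv:2507.11319 — 3 statements merged into one kernel-verified Lean document; each statement's English description precedes it below -/
import Mathlib

section
/- Let D : [0,∞) → ℝ be continuous with D ≥ ε > 0, A(x) = ∫₀ˣ D, T_ℓ ≥ 0, and W : [0,∞) → ℝ continuous. Suppose T⋆ ≥ 0 satisfies A(T⋆) = A(T_ℓ) + W(T⋆) with W(T⋆) ≥ 0. Then the function T(u) = A⁻¹(A(T_ℓ) + W(T⋆)·u), u ∈ [0,1], is a mild solution of the boundary value problem: T ∈ C¹([0,1]), T(0) = T_ℓ, T(1) = T⋆, and T(u) = T_ℓ + W(T⋆)∫₀ᵘ dv/D(T(v)) for all u. -/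
open Real MeasureTheory Set intervalIntegral

theorem stmt4 (D W : ℝ → ℝ) (ε Tl Tstar : ℝ)
    (hε : 0 < ε) (hD : ContinuousOn D (Ici 0)) (hDε : ∀ y ≥ (0:ℝ), ε ≤ D y)
    (hTl : 0 ≤ Tl) (hWc : ContinuousOn W (Ici 0)) (hTstar : 0 ≤ Tstar)
    (hWpos : 0 ≤ W Tstar)
    (hroot : (∫ y in (0:ℝ)..Tstar, D y) = (∫ y in (0:ℝ)..Tl, D y) + W Tstar) :
    ∃ T : ℝ → ℝ,
      (∀ u ∈ Icc (0:ℝ) 1, 0 ≤ T u ∧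
        (∫ y in (0:ℝ)..(T u), D y) = (∫ y in (0:ℝ)..Tl, D y) + W Tstar * u) ∧
      ContDiffOn ℝ 1 T (Icc 0 1) ∧ T 0 = Tl ∧ T 1 = Tstar ∧
      ∀ u ∈ Icc (0:ℝ) 1, T u = Tl + W Tstar * ∫ v in (0:ℝ)..u, 1 / D (T v) := by
  set w := W Tstar with hw
  set E : ℝ → ℝ := fun y => D (max y 0) with hEdef
  have hEc : Continuous E :=
    hD.comp_continuous (continuous_id.max continuous_const) (fun x => Set.mem_Ici.2 (le_max_right _ _))
  have hEε : ∀ y, ε ≤ E y := fun y => hDε _ (le_max_right _ _)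
  have hEpos : ∀ y, 0 < E y := fun y => hε.trans_le (hEε y)
  have hEeq : ∀ y, 0 ≤ y → E y = D y := fun y hy => by
    simp only [hEdef, max_eq_left hy]
  set A : ℝ → ℝ := fun x => ∫ t in (0:ℝ)..x, E t with hAdef
  have hAderiv : ∀ x, HasDerivAt A (E x) x := fun x =>
    intervalIntegral.integral_hasDerivAt_right (hEc.intervalIntegrable 0 x)
      (hEc.stronglyMeasurableAtFilter _ _) hEc.continuousAt
  have hAmono : StrictMono A := by
    apply strictMono_of_deriv_pos
    intro x
    rw [(hAderiv x).deriv]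
    exact hEpos x
  have hAcont : Continuous A := continuous_iff_continuousAt.2 fun x => (hAderiv x).continuousAt
  -- lower/upper linear bounds
  have hlow : ∀ x : ℝ, 0 ≤ x → ε * x ≤ A x := by
    intro x hx
    have := intervalIntegral.integral_mono_on hx
      (_root_.intervalIntegrable_const (c := ε) (μ := volume)) (hEc.intervalIntegrable 0 x)
      (fun t _ => hEε t)
    simpa [mul_comm] using this
  have hup : ∀ x : ℝ, x ≤ 0 → A x ≤ ε * x := by
    intro x hx
    have := intervalIntegral.integral_mono_on hx
      (_root_.intervalIntegrable_const (c := ε) (μ := volume)) (hEc.intervalIntegrable x 0)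
      (fun t _ => hEε t)
    have h2 : A x = -∫ t in x..(0:ℝ), E t := intervalIntegral.integral_symm x 0
    rw [h2]
    simp only [intervalIntegral.integral_const, smul_eq_mul, sub_zero] at this ⊢
    nlinarith [this]
  have hAsurj : Function.Surjective A := by
    apply hAcont.surjective
    · apply Filter.tendsto_atTop_mono' _ _ (Filter.Tendsto.const_mul_atTop hε Filter.tendsto_id)
      filter_upwards [Filter.eventually_ge_atTop (0:ℝ)] with x hx
      exact hlow x hx
    · apply Filter.tendsto_atBot_mono' _ _ (Filter.Tendsto.const_mul_atBot hε Filter.tendsto_id)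
      filter_upwards [Filter.eventually_le_atBot (0:ℝ)] with x hx
      exact hup x hx
  set iso := StrictMono.orderIsoOfSurjective A hAmono hAsurj with hiso
  set g : ℝ → ℝ := fun y => iso.symm y with hgdef
  have hgA : ∀ x, g (A x) = x := fun x => iso.symm_apply_apply x
  have hAg : ∀ y, A (g y) = y := fun y => iso.apply_symm_apply y
  have hgcont : Continuous g := iso.symm.continuous
  have hgderiv : ∀ y, HasDerivAt g (E (g y))⁻¹ y := by
    intro y
    exact HasDerivAt.of_local_left_inverse hgcont.continuousAt (hAderiv (g y))
      (ne_of_gt (hEpos _)) (Filter.Eventually.of_forall hAg)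
  set T : ℝ → ℝ := fun u => g (A Tl + w * u) with hTdef
  have hA0 : A 0 = 0 := by simp [hAdef]
  -- relating A at nonneg points to the D-integrals
  have hADeq : ∀ x, 0 ≤ x → A x = ∫ y in (0:ℝ)..x, D y := by
    intro x hx
    apply intervalIntegral.integral_congr
    intro y hy
    rw [uIcc_of_le hx] at hy
    exact hEeq y hy.1
  have hATl : A Tl = ∫ y in (0:ℝ)..Tl, D y := hADeq Tl hTl
  have hATstar : A Tstar = A Tl + w := by rw [hADeq Tstar hTstar, hATl, hroot]
  have hT0 : T 0 = Tl := by simp only [hTdef, mul_zero, add_zero, hgA]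
  have hT1 : T 1 = Tstar := by
    simp only [hTdef, mul_one, ← hATstar, hgA]
  have hTval : ∀ u, A (T u) = A Tl + w * u := fun u => hAg _
  have hTnonneg : ∀ u, 0 ≤ u → 0 ≤ T u := by
    intro u hu
    rw [← hAmono.le_iff_le, hA0, hTval]
    have h1 : A 0 ≤ A Tl := hAmono.monotone hTl
    rw [hA0] at h1
    nlinarith
  have hTcont : Continuous T := hgcont.comp (continuous_const.add (continuous_const.mul continuous_id))
  have hTderiv : ∀ u, HasDerivAt T (w * (E (T u))⁻¹) u := by
    intro u
    have hinner : HasDerivAt (fun u : ℝ => A Tl + w * u) w u := by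
      simpa using ((hasDerivAt_id u).const_mul w).const_add (A Tl)
    have := (hgderiv (A Tl + w * u)).comp u hinner
    simpa [hTdef, mul_comm, Function.comp_def] using this
  have hTdiff : Differentiable ℝ T := fun u => (hTderiv u).differentiableAt
  have hTsmooth : ContDiff ℝ 1 T := by
    rw [contDiff_one_iff_deriv]
    refine ⟨hTdiff, ?_⟩
    have : deriv T = fun u => w * (E (T u))⁻¹ := funext fun u => (hTderiv u).deriv
    rw [this]
    exact continuous_const.mul ((hEc.comp hTcont).inv₀ fun u => ne_of_gt (hEpos _))
  -- the integral representation
  set F : ℝ → ℝ := fun u => Tl + w * ∫ v in (0:ℝ)..u, (E (T v))⁻¹ with hFdef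
  have hintc : Continuous fun v => (E (T v))⁻¹ :=
    (hEc.comp hTcont).inv₀ fun u => ne_of_gt (hEpos _)
  have hFderiv : ∀ u, HasDerivAt F (w * (E (T u))⁻¹) u := by
    intro u
    have := intervalIntegral.integral_hasDerivAt_right (hintc.intervalIntegrable 0 u)
      (hintc.stronglyMeasurableAtFilter _ _) hintc.continuousAt
    simpa [hFdef] using (this.const_mul w).const_add Tl
  have hTF : ∀ u, T u = F u := by
    intro u
    have hdiff : Differentiable ℝ (fun u => T u - F u) :=
      fun u => ((hTderiv u).sub (hFderiv u)).differentiableAt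
    have hz : ∀ x, deriv (fun u => T u - F u) x = 0 := by
      intro x
      rw [show (fun u => T u - F u) = T - F from rfl, ((hTderiv x).sub (hFderiv x)).deriv]
      ring
    have := is_const_of_deriv_eq_zero hdiff hz u 0
    have hF0 : F 0 = Tl := by simp [hFdef]
    have : T u - F u = T 0 - F 0 := this
    rw [hT0, hF0] at this
    linarith
  refine ⟨T, ?_, hTsmooth.contDiffOn, hT0, hT1, ?_⟩
  · intro u hu
    refine ⟨hTnonneg u hu.1, ?_⟩
    rw [← hADeq _ (hTnonneg u hu.1), hTval, hATl]
  · intro u hu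
    rw [hTF u, hFdef]
    have : (∫ v in (0:ℝ)..u, 1 / D (T v)) = ∫ v in (0:ℝ)..u, (E (T v))⁻¹ := by
      apply intervalIntegral.integral_congr
      intro v hv
      rw [uIcc_of_le hu.1] at hv
      show 1 / D (T v) = (E (T v))⁻¹
      rw [hEeq _ (hTnonneg v hv.1), one_div]
    rw [this]
end

section
/- Let D : [0,∞) → ℝ be continuous with D ≥ ε > 0, A(x) = ∫₀ˣ D, and fix T_ℓ ≥ 0 and W : [0,∞) → [0,∞) continuous. The map T ↦ T(1) is a bijection between the set of mild solutions of the boundary value problem and the set of solutions T⋆ ≥ 0 of the scalar equation A(T⋆) = A(T_ℓ) + W(T⋆). In particular, if the function T ↦ A(T) − W(T) is strictly monotone, the boundary value problem has at most one mild solution. -/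
open Real MeasureTheory Set intervalIntegral Filter

theorem stmt6 (D W : ℝ → ℝ) (ε Tl : ℝ)
    (hε : 0 < ε) (hD : ContinuousOn D (Ici 0)) (hDε : ∀ y ≥ (0:ℝ), ε ≤ D y)
    (hTl : 0 ≤ Tl) (hWc : ContinuousOn W (Ici 0)) (hWpos : ∀ T ≥ (0:ℝ), 0 ≤ W T) :
    let A : ℝ → ℝ := fun x => ∫ y in (0:ℝ)..x, D y
    let Mild : (ℝ → ℝ) → Prop := fun T =>
      ContDiffOn ℝ 1 T (Icc 0 1) ∧ (∀ u ∈ Icc (0:ℝ) 1, 0 ≤ T u) ∧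
      ∀ u ∈ Icc (0:ℝ) 1, T u = Tl + W (T 1) * ∫ v in (0:ℝ)..u, 1 / D (T v)
    (∀ T, Mild T → 0 ≤ T 1 ∧ A (T 1) = A Tl + W (T 1)) ∧
    (∀ Tstar ≥ (0:ℝ), A Tstar = A Tl + W Tstar → ∃ T, Mild T ∧ T 1 = Tstar) ∧
    (∀ T T', Mild T → Mild T' → T 1 = T' 1 → EqOn T T' (Icc 0 1)) ∧
    (StrictMonoOn (fun T => A T - W T) (Ici 0) →
      ∀ T T', Mild T → Mild T' → EqOn T T' (Icc 0 1)) := by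
  intro A Mild
  -- Extended diffusion coefficient and its antiderivative
  set Dt : ℝ → ℝ := fun y => D (max y 0) with hDt_def
  have hDtc : Continuous Dt :=
    hD.comp_continuous (continuous_id.max continuous_const) (fun x => Set.mem_Ici.mpr (le_max_right _ _))
  have hDtε : ∀ y, ε ≤ Dt y := fun y => hDε _ (le_max_right _ _)
  have hDtpos : ∀ y, 0 < Dt y := fun y => lt_of_lt_of_le hε (hDtε y)
  set At : ℝ → ℝ := fun x => ∫ y in (0:ℝ)..x, Dt y with hAt_def
  have hAt_deriv : ∀ x, HasDerivAt At (Dt x) x := fun x =>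
    intervalIntegral.integral_hasDerivAt_right (hDtc.intervalIntegrable _ _)
      (hDtc.stronglyMeasurableAtFilter _ _) hDtc.continuousAt
  have hAt_diff : Differentiable ℝ At := fun x => (hAt_deriv x).differentiableAt
  have hAt_mono : StrictMono At := by
    apply strictMono_of_deriv_pos
    intro x
    rw [(hAt_deriv x).deriv]
    exact hDtpos x
  have hA_eq : ∀ x ≥ (0:ℝ), A x = At x := by
    intro x hx
    apply intervalIntegral.integral_congr
    intro y hy
    rw [uIcc_of_le hx] at hy
    simp only [hDt_def, max_eq_left hy.1]
  -- Key: for any mild solution, At (T u) = At Tl + W (T 1) * u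
  have key : ∀ T, Mild T → ∀ u ∈ Icc (0:ℝ) 1, At (T u) = At Tl + W (T 1) * u := by
    rintro T ⟨hT1, hT2, hT3⟩ u hu
    set c := W (T 1) with hc_def
    have hTcont : ContinuousOn T (Icc 0 1) := hT1.continuousOn
    -- clamp to [0,1]
    set p : ℝ → ℝ := fun v => min (max v 0) 1 with hp_def
    have hp_cont : Continuous p := (continuous_id.max continuous_const).min continuous_const
    have hp_mem : ∀ v, p v ∈ Icc (0:ℝ) 1 :=
      fun v => ⟨le_min (le_max_right _ _) zero_le_one, min_le_right _ _⟩
    have hp_id : ∀ v ∈ Icc (0:ℝ) 1, p v = v := by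
      intro v hv
      simp only [hp_def, max_eq_left hv.1, min_eq_left hv.2]
    set h : ℝ → ℝ := fun v => (Dt (T (p v)))⁻¹ with hh_def
    have hTP : Continuous (fun v => T (p v)) := hTcont.comp_continuous hp_cont hp_mem
    have hh_cont : Continuous h := (hDtc.comp hTP).inv₀ fun v => ne_of_gt (hDtpos _)
    have hh_eq : ∀ v ∈ Icc (0:ℝ) 1, h v = 1 / D (T v) := by
      intro v hv
      simp only [hh_def, hp_id v hv, hDt_def, max_eq_left (hT2 v hv), one_div]
    set Tt : ℝ → ℝ := fun w => Tl + c * ∫ v in (0:ℝ)..w, h v with hTt_def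
    have hTt_deriv : ∀ w, HasDerivAt Tt (c * h w) w := by
      intro w
      exact ((intervalIntegral.integral_hasDerivAt_right (hh_cont.intervalIntegrable _ _)
        (hh_cont.stronglyMeasurableAtFilter _ _) hh_cont.continuousAt).const_mul c).const_add Tl
    have hTt_eq : ∀ w ∈ Icc (0:ℝ) 1, Tt w = T w := by
      intro w hw
      rw [hT3 w hw]
      simp only [hTt_def]
      congr 1
      congr 1
      apply intervalIntegral.integral_congr
      intro v hv
      have hv' : v ∈ Icc (0:ℝ) 1 := by
        rcases le_total 0 w with h' | h'
        · rw [uIcc_of_le h'] at hv; exact ⟨hv.1, le_trans hv.2 hw.2⟩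
        · rw [uIcc_of_ge h'] at hv; exact ⟨le_trans hw.1 hv.1, le_trans hv.2 zero_le_one⟩
      exact hh_eq v hv'
    set g : ℝ → ℝ := fun w => At (Tt w) - c * w with hg_def
    have hg_deriv0 : ∀ w ∈ Icc (0:ℝ) 1, HasDerivAt g 0 w := by
      intro w hw
      have h1 : HasDerivAt (fun w => At (Tt w)) (Dt (Tt w) * (c * h w)) w :=
        (hAt_deriv (Tt w)).comp w (hTt_deriv w)
      have h2 : HasDerivAt g (Dt (Tt w) * (c * h w) - c * 1) w :=
        h1.sub ((hasDerivAt_id w).const_mul c)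
      convert h2 using 1
      have hhh : h w = (Dt (T w))⁻¹ := by simp only [hh_def, hp_id w hw]
      have hne : Dt (T w) ≠ 0 := ne_of_gt (hDtpos _)
      rw [hhh, hTt_eq w hw]
      field_simp
      ring
    have hg_const : ∀ w ∈ Icc (0:ℝ) 1, g w = g 0 := by
      intro w hw
      apply constant_of_has_deriv_right_zero
        (fun x hx => ((hg_deriv0 x hx).continuousAt.continuousWithinAt))
      · intro x hx
        exact (hg_deriv0 x (Ico_subset_Icc_self hx)).hasDerivWithinAt
      · exact hw
    have hT0 : T 0 = Tl := by
      have := hT3 0 ⟨le_refl _, zero_le_one⟩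
      simpa using this
    have hgu : At (T u) - c * u = At Tl := by
      have hh2 := hg_const u hu
      simp only [hg_def] at hh2
      rw [hTt_eq u hu, hTt_eq 0 ⟨le_refl _, zero_le_one⟩, hT0] at hh2
      simpa using hh2
    linarith
  -- part 1
  have part1 : ∀ T, Mild T → 0 ≤ T 1 ∧ A (T 1) = A Tl + W (T 1) := by
    intro T hT
    have h1mem : (1:ℝ) ∈ Icc (0:ℝ) 1 := ⟨zero_le_one, le_refl _⟩
    have hT1pos : 0 ≤ T 1 := hT.2.1 1 h1mem
    refine ⟨hT1pos, ?_⟩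
    have := key T hT 1 h1mem
    rw [hA_eq (T 1) hT1pos, hA_eq Tl hTl]
    rw [this]; ring
  -- part 3
  have part3 : ∀ T T', Mild T → Mild T' → T 1 = T' 1 → EqOn T T' (Icc 0 1) := by
    intro T T' hT hT' h11 u hu
    have e1 := key T hT u hu
    have e2 := key T' hT' u hu
    rw [h11] at e1
    exact hAt_mono.injective (by rw [e1, e2])
  refine ⟨part1, ?_, part3, ?_⟩
  · -- part 2 : construction
    intro Tstar hTstar hroot
    -- surjectivity of At
    have hAt_ge : ∀ x ≥ (0:ℝ), ε * x ≤ At x := by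
      intro x hx
      have h1 := intervalIntegral.integral_mono_on (μ := volume) (f := fun _ => ε)
        (g := Dt) hx intervalIntegrable_const (hDtc.intervalIntegrable 0 x)
        (fun y _ => hDtε y)
      rw [intervalIntegral.integral_const, smul_eq_mul, sub_zero, mul_comm] at h1
      exact h1
    have hAt_le : ∀ x ≤ (0:ℝ), At x ≤ ε * x := by
      intro x hx
      have h1 := intervalIntegral.integral_mono_on (μ := volume) (f := fun _ => ε)
        (g := Dt) hx intervalIntegrable_const (hDtc.intervalIntegrable x 0)
        (fun y _ => hDtε y)
      rw [intervalIntegral.integral_const, smul_eq_mul] at h1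
      have h2 : At x = -∫ y in x..(0:ℝ), Dt y := intervalIntegral.integral_symm x 0
      rw [h2]
      nlinarith
    have htop : Tendsto At atTop atTop :=
      tendsto_atTop_mono' atTop ((eventually_ge_atTop (0:ℝ)).mono fun x hx => hAt_ge x hx)
        (Tendsto.const_mul_atTop hε tendsto_id)
    have hbot : Tendsto At atBot atBot :=
      tendsto_atBot_mono' atBot ((eventually_le_atBot (0:ℝ)).mono
        fun x hx => hAt_le x hx) (Tendsto.const_mul_atBot hε tendsto_id)
    have hAt_surj : Function.Surjective At :=
      hAt_diff.continuous.surjective htop hbot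
    set e : ℝ ≃o ℝ := StrictMono.orderIsoOfSurjective At hAt_mono hAt_surj with he_def
    set B : ℝ → ℝ := fun y => e.symm y with hB_def
    have hAB : ∀ y, At (B y) = y := fun y =>
      StrictMono.orderIsoOfSurjective_self_symm_apply At hAt_mono hAt_surj y
    have hB_cont : Continuous B := e.symm.continuous
    have hB_deriv : ∀ y, HasDerivAt B (Dt (B y))⁻¹ y := fun y =>
      HasDerivAt.of_local_left_inverse hB_cont.continuousAt (hAt_deriv (B y))
        (ne_of_gt (hDtpos _)) (Eventually.of_forall hAB)
    set c := W Tstar with hc_def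
    have hc : 0 ≤ c := hWpos _ hTstar
    set T : ℝ → ℝ := fun u => B (At Tl + c * u) with hT_def
    have hlin : ∀ u : ℝ, HasDerivAt (fun u : ℝ => At Tl + c * u) c u := by
      intro u
      simpa using ((hasDerivAt_id u).const_mul c).const_add (At Tl)
    have hT_deriv : ∀ u, HasDerivAt T ((Dt (T u))⁻¹ * c) u := fun u =>
      (hB_deriv _).comp u (hlin u)
    have hT_cont : Continuous T :=
      hB_cont.comp (continuous_const.add (continuous_const.mul continuous_id))
    have hATu : ∀ u, At (T u) = At Tl + c * u := fun u => hAB _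
    have hroot' : At Tstar = At Tl + c := by
      rw [← hA_eq Tstar hTstar, ← hA_eq Tl hTl, hroot, hc_def]
    have hT1 : T 1 = Tstar := by
      apply hAt_mono.injective
      rw [hATu 1, mul_one, hroot']
    have hTnonneg : ∀ u ∈ Icc (0:ℝ) 1, 0 ≤ T u := by
      intro u hu
      have h0 : At 0 ≤ At Tl := hAt_mono.le_iff_le.mpr hTl
      have h1 : At 0 ≤ At (T u) := by
        rw [hATu]
        nlinarith [mul_nonneg hc hu.1]
      exact hAt_mono.le_iff_le.mp h1
    have hT_diffb : Differentiable ℝ T := fun u => (hT_deriv u).differentiableAt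
    have hderiv_eq : deriv T = fun u => (Dt (T u))⁻¹ * c :=
      funext fun u => (hT_deriv u).deriv
    have hT_cd : ContDiff ℝ 1 T := by
      rw [contDiff_one_iff_deriv]
      refine ⟨hT_diffb, ?_⟩
      rw [hderiv_eq]
      exact ((hDtc.comp hT_cont).inv₀ fun u => ne_of_gt (hDtpos _)).mul continuous_const
    have hT0 : T 0 = Tl := by
      apply hAt_mono.injective
      rw [hATu 0, mul_zero, add_zero]
    refine ⟨T, ⟨hT_cd.contDiffOn, hTnonneg, ?_⟩, hT1⟩
    intro u hu
    have hFTC := intervalIntegral.integral_eq_sub_of_hasDerivAt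
      (f := T) (f' := fun v => (Dt (T v))⁻¹ * c) (a := (0:ℝ)) (b := u)
      (fun v _ => hT_deriv v)
      ((((hDtc.comp hT_cont).inv₀ fun v => ne_of_gt (hDtpos _)).mul
        continuous_const).intervalIntegrable _ _)
    rw [hT0] at hFTC
    have hcong : ∫ v in (0:ℝ)..u, (Dt (T v))⁻¹ * c
        = ∫ v in (0:ℝ)..u, c * (1 / D (T v)) := by
      apply intervalIntegral.integral_congr
      intro v hv
      have hv' : v ∈ Icc (0:ℝ) 1 := by
        rw [uIcc_of_le hu.1] at hv
        exact ⟨hv.1, le_trans hv.2 hu.2⟩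
      have hvnn := hTnonneg v hv'
      show (Dt (T v))⁻¹ * c = c * (1 / D (T v))
      rw [hDt_def]
      simp only [max_eq_left hvnn, one_div]
      ring
    rw [hcong, intervalIntegral.integral_const_mul] at hFTC
    rw [hT1, ← hc_def]
    linarith
  · -- part 4
    intro hmono T T' hT hT'
    apply part3 T T' hT hT'
    have h1 := part1 T hT
    have h2 := part1 T' hT'
    have : A (T 1) - W (T 1) = A (T' 1) - W (T' 1) := by
      rw [h1.2, h2.2]; ring
    exact hmono.injOn h1.1 h2.1 this
end

section
/- Let D : [0,∞) → ℝ be continuous with D ≥ ε > 0, T_ℓ ≥ 0, and W : [0,∞) → [0,∞) continuous with W(T) ≤ K(1+T^α) for some K > 0 and α ∈ [0,1). Suppose in addition that T ↦ A(T) − W(T) is strictly increasing, where A(x) = ∫₀ˣ D. Then the scalar equation A(T⋆) = A(T_ℓ) + W(T⋆) has exactly one solution T⋆ ≥ T_ℓ, and consequently the boundary value problem T(u) = T_ℓ + W(T(1))∫₀ᵘ dv/D(T(v)) has exactly one mild solution. -/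
open Real MeasureTheory Set intervalIntegral

theorem stmt17 (D W : ℝ → ℝ) (ε Tl K α : ℝ)
    (hε : 0 < ε) (hD : ContinuousOn D (Ici 0)) (hDε : ∀ y ≥ (0:ℝ), ε ≤ D y)
    (hTl : 0 ≤ Tl) (hK : 0 < K) (hα : α ∈ Ico (0:ℝ) 1)
    (hWc : ContinuousOn W (Ici 0)) (hW0 : ∀ T ≥ (0:ℝ), 0 ≤ W T)
    (hW : ∀ T ≥ (0:ℝ), W T ≤ K * (1 + T ^ α))
    (hmono : StrictMonoOn (fun T => (∫ y in (0:ℝ)..T, D y) - W T) (Ici 0)) :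
    let A : ℝ → ℝ := fun x => ∫ y in (0:ℝ)..x, D y
    let Mild : (ℝ → ℝ) → Prop := fun T =>
      ContDiffOn ℝ 1 T (Icc 0 1) ∧ (∀ u ∈ Icc (0:ℝ) 1, 0 ≤ T u) ∧
      ∀ u ∈ Icc (0:ℝ) 1, T u = Tl + W (T 1) * ∫ v in (0:ℝ)..u, 1 / D (T v)
    (∃! Ts : ℝ, Tl ≤ Ts ∧ A Ts = A Tl + W Ts) ∧
    (∃ T : ℝ → ℝ, Mild T) ∧
    (∀ T T', Mild T → Mild T' → EqOn T T' (Icc 0 1)) := by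
  intro A Mild
  have hA : A = fun x => ∫ y in (0:ℝ)..x, D y := rfl
  -- the extended diffusivity and its primitive
  have hDtc : Continuous (fun y : ℝ => D (max y 0)) :=
    hD.comp_continuous (continuous_id.max continuous_const) (fun x => mem_Ici.2 (le_max_right _ _))
  set Dt : ℝ → ℝ := fun y => D (max y 0) with hDtdef
  have hDtε : ∀ y, ε ≤ Dt y := fun y => hDε _ (le_max_right _ _)
  have hDtpos : ∀ y, 0 < Dt y := fun y => lt_of_lt_of_le hε (hDtε y)
  have hDteq : ∀ y ≥ (0:ℝ), Dt y = D y := fun y hy => by simp [Dt, max_eq_left hy]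
  set At : ℝ → ℝ := fun x => ∫ y in (0:ℝ)..x, Dt y with hAtdef
  have hAt_deriv : ∀ x, HasDerivAt At (Dt x) x :=
    fun x => (hDtc.integral_hasStrictDerivAt 0 x).hasDerivAt
  have hAtdiff : Differentiable ℝ At := fun x => (hAt_deriv x).differentiableAt
  have hAtc : Continuous At := hAtdiff.continuous
  have hAt0 : At 0 = 0 := intervalIntegral.integral_same
  have hAeq : ∀ x ≥ (0:ℝ), A x = At x := by
    intro x hx
    apply intervalIntegral.integral_congr
    intro y hy
    rw [uIcc_of_le hx] at hy
    exact (hDteq y hy.1).symm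
  have hgrow : ∀ a b : ℝ, a ≤ b → ε * (b - a) ≤ At b - At a := by
    intro a b hab
    have h1 : ∀ x, HasDerivAt (fun x => At x - ε * x) (Dt x - ε) x := by
      intro x
      simpa using (hAt_deriv x).fun_sub ((hasDerivAt_id x).const_mul ε)
    have h2 : Monotone (fun x => At x - ε * x) := by
      apply monotone_of_deriv_nonneg (fun x => (h1 x).differentiableAt)
      intro x; rw [(h1 x).deriv]; linarith [hDtε x]
    have := h2 hab; simp only at this; linarith
  have hAtmono : StrictMono At := by
    apply strictMono_of_deriv_pos
    intro x; rw [(hAt_deriv x).deriv]; exact hDtpos x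
  have htop : Filter.Tendsto At Filter.atTop Filter.atTop := by
    apply Filter.tendsto_atTop_mono' _ (_ : ∀ᶠ x in Filter.atTop, ε * x ≤ At x)
      (Filter.Tendsto.const_mul_atTop hε Filter.tendsto_id)
    filter_upwards [Filter.eventually_ge_atTop (0:ℝ)] with x hx
    have := hgrow 0 x hx; rw [hAt0] at this; linarith
  have hbot : Filter.Tendsto At Filter.atBot Filter.atBot := by
    apply Filter.tendsto_atBot_mono' _ (_ : ∀ᶠ x in Filter.atBot, At x ≤ ε * x)
      (Filter.Tendsto.const_mul_atBot hε Filter.tendsto_id)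
    filter_upwards [Filter.eventually_le_atBot (0:ℝ)] with x hx
    have := hgrow x 0 hx; rw [hAt0] at this; linarith
  have hAtsurj : Function.Surjective At := hAtc.surjective htop hbot
  set e : ℝ ≃o ℝ := StrictMono.orderIsoOfSurjective At hAtmono hAtsurj with he
  set B : ℝ → ℝ := fun y => e.symm y with hB
  have hABy : ∀ y, At (B y) = y := fun y => e.apply_symm_apply y
  have hBAx : ∀ x, B (At x) = x := fun x => e.symm_apply_apply x
  have hBc : Continuous B := (e.symm).continuous
  have hBmono : Monotone B := fun a b hab => (e.symm).monotone hab
  have hB_deriv : ∀ y, HasDerivAt B (Dt (B y))⁻¹ y := by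
    intro y
    exact HasDerivAt.of_local_left_inverse hBc.continuousAt (hAt_deriv (B y))
      (ne_of_gt (hDtpos _)) (Filter.Eventually.of_forall (fun z => hABy z))
  -- a point M where At dominates
  obtain ⟨M, hM1, hMTl, hMbig⟩ :
      ∃ M : ℝ, 1 ≤ M ∧ Tl ≤ M ∧ At Tl + K * (1 + M ^ α) ≤ ε * M := by
    have hsub : Filter.Tendsto (fun x : ℝ => K * x ^ (α - 1)) Filter.atTop (nhds 0) := by
      have h := (tendsto_rpow_neg_atTop (by linarith [hα.2] : (0:ℝ) < 1 - α)).const_mul K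
      simpa [neg_sub] using h
    have h1 : ∀ᶠ x : ℝ in Filter.atTop, K * x ^ (α - 1) ≤ ε / 2 :=
      hsub.eventually_le_const (by positivity)
    have h2 : ∀ᶠ x : ℝ in Filter.atTop, At Tl + K ≤ ε / 2 * x :=
      (Filter.Tendsto.const_mul_atTop (by positivity : (0:ℝ) < ε / 2)
        Filter.tendsto_id).eventually_ge_atTop _
    obtain ⟨M, hM1, hMTl, hM2, hM3⟩ := ((Filter.eventually_ge_atTop (1:ℝ)).and
      ((Filter.eventually_ge_atTop Tl).and (h1.and h2))).exists
    refine ⟨M, hM1, hMTl, ?_⟩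
    have hMpos : (0:ℝ) < M := by linarith
    have hpow : M ^ α = M ^ (α - 1) * M := by
      have h := Real.rpow_add hMpos (α - 1) 1
      rw [Real.rpow_one] at h
      rw [← h]; norm_num
    have hKα : K * M ^ α ≤ ε / 2 * M := by
      rw [hpow, ← mul_assoc]
      exact mul_le_mul_of_nonneg_right hM2 (le_of_lt hMpos)
    nlinarith
  -- intermediate value theorem for At - W on [Tl, M]
  have hMW : At Tl ≤ At M - W M := by
    have h1 : W M ≤ K * (1 + M ^ α) := hW M (by linarith)
    have h2 := hgrow 0 M (by linarith)
    rw [hAt0] at h2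
    linarith
  have hφc : ContinuousOn (fun T => At T - W T) (Icc Tl M) :=
    (hAtc.continuousOn).sub (hWc.mono (fun x hx => le_trans hTl hx.1))
  obtain ⟨Ts, hTsmem, hTseq⟩ := intermediate_value_Icc hMTl hφc
    ⟨by simpa using hW0 Tl hTl, hMW⟩
  have hTsTl : Tl ≤ Ts := hTsmem.1
  have hTs0 : (0:ℝ) ≤ Ts := le_trans hTl hTsTl
  have hTsroot : A Ts = A Tl + W Ts := by
    rw [hAeq Ts hTs0, hAeq Tl hTl]
    simp only at hTseq
    linarith
  have huniq : ∀ r, Tl ≤ r → A r = A Tl + W r → r = Ts := by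
    intro r hr hreq
    have h0r : (0:ℝ) ≤ r := le_trans hTl hr
    apply hmono.injOn (mem_Ici.2 h0r) (mem_Ici.2 hTs0)
    show A r - W r = A Ts - W Ts
    rw [hreq, hTsroot]; ring
  -- the candidate mild solution
  set c := W Ts with hc
  have hc0 : 0 ≤ c := hW0 Ts hTs0
  have hAtTs : At Ts = At Tl + c := by
    rw [← hAeq Ts hTs0, ← hAeq Tl hTl]; exact hTsroot
  set T0 : ℝ → ℝ := fun u => B (At Tl + c * u) with hT0def
  have hT00 : T0 0 = Tl := by
    have : T0 0 = B (At Tl) := by simp [hT0def]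
    rw [this, hBAx]
  have hT01 : T0 1 = Ts := by
    have : T0 1 = B (At Ts) := by rw [hAtTs]; simp [hT0def]
    rw [this, hBAx]
  have hT0ge : ∀ u ≥ (0:ℝ), Tl ≤ T0 u := by
    intro u hu
    have h1 : At Tl ≤ At Tl + c * u := by nlinarith
    have h2 := hBmono h1
    rw [hBAx Tl] at h2
    exact h2
  have hT0pos : ∀ u ≥ (0:ℝ), (0:ℝ) ≤ T0 u := fun u hu => le_trans hTl (hT0ge u hu)
  have hT0deriv : ∀ u, HasDerivAt T0 (c / Dt (T0 u)) u := by
    intro u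
    have h1 : HasDerivAt (fun u : ℝ => At Tl + c * u) c u := by
      simpa using ((hasDerivAt_id u).const_mul c).const_add (At Tl)
    have h2 := (hB_deriv (At Tl + c * u)).comp u h1
    simpa [hT0def, div_eq_inv_mul, Function.comp_def] using h2
  have hT0cont : Continuous T0 :=
    hBc.comp (continuous_const.add (continuous_const.mul continuous_id))
  have hT0dc : Continuous fun u => c / Dt (T0 u) :=
    continuous_const.div (hDtc.comp hT0cont) (fun u => ne_of_gt (hDtpos _))
  have hT0cd : ContDiff ℝ 1 T0 := by
    rw [contDiff_one_iff_deriv]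
    refine ⟨fun u => (hT0deriv u).differentiableAt, ?_⟩
    have : deriv T0 = fun u => c / Dt (T0 u) := funext fun u => (hT0deriv u).deriv
    rw [this]; exact hT0dc
  have hT0mild2 : ∀ u ∈ Icc (0:ℝ) 1, T0 u = Tl + W (T0 1) * ∫ v in (0:ℝ)..u, 1 / D (T0 v) := by
    intro u hu
    have hint : (∫ v in (0:ℝ)..u, c / Dt (T0 v)) = T0 u - Tl := by
      rw [← hT00]
      exact intervalIntegral.integral_eq_sub_of_hasDerivAt (fun v _ => hT0deriv v)
        (hT0dc.intervalIntegrable 0 u)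
    have e1 : (∫ v in (0:ℝ)..u, 1 / D (T0 v)) = ∫ v in (0:ℝ)..u, (Dt (T0 v))⁻¹ := by
      apply intervalIntegral.integral_congr
      intro v hv
      rw [uIcc_of_le hu.1] at hv
      show 1 / D (T0 v) = (Dt (T0 v))⁻¹
      rw [one_div, hDteq _ (hT0pos v hv.1)]
    have e2 : c * ∫ v in (0:ℝ)..u, (Dt (T0 v))⁻¹ = ∫ v in (0:ℝ)..u, c / Dt (T0 v) := by
      rw [← intervalIntegral.integral_const_mul]
      simp [div_eq_mul_inv]
    rw [hT01, ← hc, e1, e2, hint]; ring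
  have hT0mild : Mild T0 :=
    ⟨hT0cd.contDiffOn, fun u hu => hT0pos u hu.1, hT0mild2⟩
  -- every mild solution equals T0 on [0,1]
  have key : ∀ T : ℝ → ℝ, Mild T → ∀ u ∈ Icc (0:ℝ) 1, T u = T0 u := by
    intro T hT
    obtain ⟨hTc1, hTpos, hTeq⟩ := hT
    set w := W (T 1) with hw
    have hw0 : 0 ≤ w := hW0 _ (hTpos 1 ⟨zero_le_one, le_refl 1⟩)
    have hTcont : ContinuousOn T (Icc 0 1) := hTc1.continuousOn
    set p : ℝ → ℝ := fun v => max 0 (min v 1) with hp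
    have hpc : Continuous p := continuous_const.max (continuous_id.min continuous_const)
    have hpmem : ∀ v, p v ∈ Icc (0:ℝ) 1 := fun v =>
      ⟨le_max_left _ _, max_le zero_le_one (min_le_right _ _)⟩
    have hpeq : ∀ v ∈ Icc (0:ℝ) 1, p v = v := fun v hv => by
      simp [hp, min_eq_left hv.2, max_eq_right hv.1]
    set g : ℝ → ℝ := fun v => T (p v) with hg
    have hgc : Continuous g := hTcont.comp_continuous hpc hpmem
    have hgpos : ∀ v, (0:ℝ) ≤ g v := fun v => hTpos _ (hpmem v)
    have hgeq : ∀ v ∈ Icc (0:ℝ) 1, g v = T v := fun v hv => by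
      rw [hg]; simp only; rw [hpeq v hv]
    have hic : Continuous fun v => (Dt (g v))⁻¹ :=
      (hDtc.comp hgc).inv₀ (fun v => ne_of_gt (hDtpos _))
    set F : ℝ → ℝ := fun u => Tl + w * ∫ v in (0:ℝ)..u, (Dt (g v))⁻¹ with hF
    have hFderiv : ∀ u, HasDerivAt F (w * (Dt (g u))⁻¹) u := fun u =>
      ((hic.integral_hasStrictDerivAt 0 u).hasDerivAt.const_mul w).const_add Tl
    have hTF : ∀ u ∈ Icc (0:ℝ) 1, T u = F u := by
      intro u hu
      rw [hTeq u hu]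
      have : (∫ v in (0:ℝ)..u, 1 / D (T v)) = ∫ v in (0:ℝ)..u, (Dt (g v))⁻¹ := by
        apply intervalIntegral.integral_congr
        intro v hv
        rw [uIcc_of_le hu.1] at hv
        have hv1 : v ∈ Icc (0:ℝ) 1 := ⟨hv.1, le_trans hv.2 hu.2⟩
        show 1 / D (T v) = (Dt (g v))⁻¹
        rw [one_div, hgeq v hv1, hDteq _ (hTpos v hv1)]
      rw [this]
    set H : ℝ → ℝ := fun u => At (F u) - w * u with hH
    have hHderiv : ∀ u, HasDerivAt H (Dt (F u) * (w * (Dt (g u))⁻¹) - w) u := fun u =>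
      ((hAt_deriv (F u)).comp u (hFderiv u)).sub
        (by simpa using (hasDerivAt_id u).const_mul w)
    have hHzero : ∀ u ∈ Icc (0:ℝ) 1, H u = H 0 := by
      apply constant_of_has_deriv_right_zero
      · exact fun u _ => (hHderiv u).continuousAt.continuousWithinAt
      · intro u hu
        have huI : u ∈ Icc (0:ℝ) 1 := ⟨hu.1, le_of_lt hu.2⟩
        have h1 : F u = g u := by rw [← hTF u huI, hgeq u huI]
        have hne : Dt (g u) ≠ 0 := ne_of_gt (hDtpos _)
        have h2 : Dt (F u) * (w * (Dt (g u))⁻¹) - w = 0 := by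
          rw [h1]; field_simp; ring
        exact (h2 ▸ hHderiv u).hasDerivWithinAt
    have hF0 : F 0 = Tl := by simp [hF]
    have hAtT : ∀ u ∈ Icc (0:ℝ) 1, At (T u) = At Tl + w * u := by
      intro u hu
      have h1 : At (F u) - w * u = At (F 0) - w * 0 := hHzero u hu
      rw [hF0] at h1
      rw [hTF u hu]
      linarith
    have hT1ge : Tl ≤ T 1 := by
      have h1 : T 1 = F 1 := hTF 1 ⟨zero_le_one, le_refl 1⟩
      have h2 : (0:ℝ) ≤ ∫ v in (0:ℝ)..1, (Dt (g v))⁻¹ :=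
        intervalIntegral.integral_nonneg zero_le_one
          (fun v _ => le_of_lt (inv_pos.2 (hDtpos _)))
      rw [h1, hF]
      simp only
      nlinarith
    have hT1 : T 1 = Ts := by
      apply huniq _ hT1ge
      have h1 := hAtT 1 ⟨zero_le_one, le_refl 1⟩
      rw [mul_one] at h1
      rw [hAeq _ (le_trans hTl hT1ge), hAeq Tl hTl, h1, hw]
    intro u hu
    have h1 := hAtT u hu
    rw [hw, hT1, ← hc] at h1
    have h2 : At (T0 u) = At Tl + c * u := hABy _
    exact hAtmono.injective (by rw [h1, h2])
  refine ⟨⟨Ts, ⟨hTsTl, hTsroot⟩, fun r hr => huniq r hr.1 hr.2⟩, ⟨T0, hT0mild⟩, ?_⟩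
  intro T T' hT hT' u hu
  rw [key T hT u hu, key T' hT' u hu]
end
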